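/- With W a realization of a matroid M and 𝔞 = (f₁g₁,…,fₙgₙ) the ideal of pairs of W, the minimal primes of S/𝔞 are exactly the ideals 𝔭_{F,F^∁} = (fᵢ : i ∈ F) + (gⱼ : j ∉ F) as F ranges over the cyclic flats of M. Consequently, V(𝔞) = ⋃_{F ∈ cyc(M)} V(𝔭_{F,F^∁}). -/

import Mathlib

open MvPolynomial

/-- A circuit of a matroid: a minimal dependent set. -/
def MatroidCircuit {α : Type*} (M : Matroid α) (C : Set α) : Prop := Minimal M.Dep C

/-- A cyclic flat: a flat which is a union of circuits. -/
def IsCyclicFlat {α : Type*} (M : Matroid α) (F : Set α) : Prop :=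
  M.IsFlat F ∧ ∃ 𝒞 : Set (Set α), (∀ C ∈ 𝒞, MatroidCircuit M C) ∧ F = ⋃₀ 𝒞

section Helpers

variable {k : Type} [Field k] {n : ℕ}
variable {k : Type} [Field k] {n : ℕ}

lemma mem_span_X_of_isHomogeneous_one (p : MvPolynomial (Fin n) k)
    (hp : p.IsHomogeneous 1) :
    p ∈ Submodule.span k (Set.range (X : Fin n → MvPolynomial (Fin n) k)) := by
  rw [← p.support_sum_monomial_coeff]
  refine Submodule.sum_mem _ fun m hm => ?_
  have hdeg : (m.sum fun _ e => e) = 1 := by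
    have := hp (mem_support_iff.1 hm)
    simpa [Finsupp.weight_apply, Finsupp.sum] using this
  -- m = single j 1 for some j
  obtain ⟨j, hj⟩ : ∃ j, m = Finsupp.single j 1 := by
    have hsum : ∑ a ∈ m.support, m a = 1 := hdeg
    have hne : m.support.Nonempty := by
      by_contra h
      rw [Finset.not_nonempty_iff_eq_empty.1 h] at hsum
      simp at hsum
    have hcard : m.support.card ≤ 1 := by
      have : m.support.card * 1 ≤ ∑ a ∈ m.support, m a :=
        Finset.card_nsmul_le_sum m.support m 1 (fun a ha => Finsupp.mem_support_iff.1 ha |>.bot_lt)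
      omega
    obtain ⟨j, hj⟩ := Finset.card_eq_one.1 (le_antisymm hcard (Finset.card_pos.2 hne))
    refine ⟨j, ?_⟩
    have hmj : m j = 1 := by
      rw [hj] at hsum; simpa using hsum
    ext i
    by_cases hij : i = j
    · simp [hij, hmj]
    · have : i ∉ m.support := by rw [hj]; simp [hij]
      simp [Finsupp.notMem_support_iff.1 this, Finsupp.single_apply, Ne.symm hij, hij]
  have : (monomial m) (coeff m p) = (coeff m p) • X j := by
    rw [smul_eq_C_mul, X, C_mul_monomial, mul_one, hj]
  rw [this]
  exact Submodule.smul_mem _ _ (Submodule.subset_span ⟨j, rfl⟩)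

lemma span_k_le_ideal {T : Set (MvPolynomial (Fin n) k)} {q : Ideal (MvPolynomial (Fin n) k)}
    (h : T ⊆ q) : ∀ x ∈ Submodule.span k T, x ∈ q := by
  intro x hx
  have : Submodule.span k T ≤ (Submodule.restrictScalars k q) := Submodule.span_le.2 h
  exact this hx

lemma ideal_span_linear (T : Set (MvPolynomial (Fin n) k)) (hT : ∀ t ∈ T, t.IsHomogeneous 1) :
    (Ideal.span T).IsPrime ∧
    ∀ h : MvPolynomial (Fin n) k, h.IsHomogeneous 1 → h ∈ Ideal.span T →
      h ∈ Submodule.span k T := by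
  classical
  set U : Submodule k (MvPolynomial (Fin n) k) := Submodule.span k T with hU
  obtain ⟨U', hcompl⟩ := Submodule.exists_isCompl U
  set π : MvPolynomial (Fin n) k →ₗ[k] MvPolynomial (Fin n) k :=
    U.subtype.comp (Submodule.projectionOnto U U' hcompl) with hπ
  have hπ_mem : ∀ x, π x ∈ U := fun x => (Submodule.projectionOnto U U' hcompl x).2
  have hπ_id : ∀ x ∈ U, π x = x := by
    intro x hx
    have := Submodule.projectionOnto_apply_left hcompl ⟨x, hx⟩
    simpa [hπ] using congrArg (Submodule.subtype U) this
  set v : Fin n → MvPolynomial (Fin n) k := fun j => X j - π (X j) with hv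
  set φ : MvPolynomial (Fin n) k →ₐ[k] MvPolynomial (Fin n) k := aeval v with hφ
  have hUI : ∀ x ∈ U, x ∈ Ideal.span T := fun x hx => span_k_le_ideal Ideal.subset_span x hx
  have hJ : ∀ p : MvPolynomial (Fin n) k, p - φ p ∈ Ideal.span T := by
    intro p
    induction p using MvPolynomial.induction_on with
    | C a => simp [hφ, aeval_C, algebraMap_eq]
    | add p q hp hq =>
        have : p + q - φ (p + q) = (p - φ p) + (q - φ q) := by
          rw [map_add]; ring
        rw [this]; exact Ideal.add_mem _ hp hq
    | mul_X p j hp =>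
        have hXj : X j - v j ∈ Ideal.span T := by
          have : X j - v j = π (X j) := by rw [hv]; ring
          rw [this]; exact hUI _ (hπ_mem _)
        have : p * X j - φ (p * X j) = p * (X j - v j) + (p - φ p) * v j := by
          rw [map_mul, hφ, aeval_X]; ring
        rw [this]
        exact Ideal.add_mem _ (Ideal.mul_mem_left _ _ hXj) (Ideal.mul_mem_right _ _ hp)
  have hφlin : ∀ h ∈ Submodule.span k (Set.range (X : Fin n → MvPolynomial (Fin n) k)),
      φ h = h - π h := by
    intro h hh
    induction hh using Submodule.span_induction with
    | mem x hx => obtain ⟨j, rfl⟩ := hx; rw [hφ, aeval_X]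
    | zero => simp
    | add x y _ _ hx hy => rw [map_add, map_add, hx, hy]; ring
    | smul c x _ hx => rw [map_smul, map_smul, hx, smul_sub]
  have hT0 : ∀ t ∈ T, φ t = 0 := by
    intro t ht
    rw [hφlin t (mem_span_X_of_isHomogeneous_one t (hT t ht)),
      hπ_id t (Submodule.subset_span ht), sub_self]
  have hker : RingHom.ker φ.toRingHom = Ideal.span T := by
    apply le_antisymm
    · intro p hp
      have h0 : φ p = 0 := hp
      have := hJ p
      rwa [h0, sub_zero] at this
    · rw [Ideal.span_le]
      intro t ht
      simp only [SetLike.mem_coe, RingHom.mem_ker, AlgHom.toRingHom_eq_coe,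
        RingHom.coe_coe]
      exact hT0 t ht
  refine ⟨?_, ?_⟩
  · rw [← hker]; exact RingHom.ker_isPrime _
  · intro h hh hmem
    rw [← hker] at hmem
    have h0 : φ h = 0 := hmem
    have h1 := hφlin h (mem_span_X_of_isHomogeneous_one h hh)
    rw [h0, eq_comm, sub_eq_zero] at h1
    rw [h1]
    exact hπ_mem h

open Matroid in
lemma dual_closure_helper {α : Type*} {M : Matroid α} (hE : M.E = Set.univ)
    {B Z : Set α} {x : α} (hB : M.IsBase B) (hxB : x ∈ B)
    (hZ : ∀ b, b ∉ insert x Z → b ∈ M.closure (B \ {x}))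
    (hZx : x ∉ Z) (hZB : Disjoint Z B) : x ∈ M✶.closure Z := by
  have hZE : Z ⊆ M✶.E := by rw [dual_ground, hE]; exact Set.subset_univ _
  have hZi : M✶.Indep Z := (dual_indep_iff_exists (by rw [hE]; exact Set.subset_univ _)).2 ⟨B, hB, hZB⟩
  have hdep : M✶.Dep (insert x Z) := by
    rw [dep_iff]
    refine ⟨fun hind => ?_, by rw [dual_ground, hE]; exact Set.subset_univ _⟩
    obtain ⟨B₂, hB₂, hdisj⟩ := (dual_indep_iff_exists
      (by rw [hE]; exact Set.subset_univ _)).1 hind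
    have hB₂cl : B₂ ⊆ M.closure (B \ {x}) := fun b hb =>
      hZ b (fun hmem => (hdisj.ne_of_mem hmem hb) rfl)
    have hEcl : M.E ⊆ M.closure (B \ {x}) := by
      rw [← hB₂.closure_eq]
      exact M.closure_subset_closure_of_subset_closure hB₂cl
    have hxcl : x ∉ M.closure (B \ {x}) := by
      have hBd : M.Indep (B \ {x}) := hB.indep.subset Set.diff_subset
      rw [hBd.mem_closure_iff]
      rintro (hdep' | hmem)
      · exact hdep'.not_indep (by
          rw [Set.insert_diff_singleton, Set.insert_eq_of_mem hxB]; exact hB.indep)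
      · exact hmem.2 rfl
    exact hxcl (hEcl (by rw [hE]; trivial))
  exact hZi.mem_closure_iff.2 (Or.inl hdep)

open Matroid in
lemma notMem_dual_closure {α : Type*} {M : Matroid α} (hE : M.E = Set.univ)
    {e : α} {X : Set α} (heX : e ∉ X) (h : e ∈ M.closure ((X ∪ {e})ᶜ)) :
    e ∉ M✶.closure X := by
  intro hecl
  set Y := (X ∪ {e})ᶜ with hY
  obtain ⟨I, hI⟩ := M.exists_isBasis Y (by rw [hE]; exact Set.subset_univ _)
  have heY : e ∉ Y := by simp [hY]
  have heI : e ∉ I := fun h' => heY (hI.subset h')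
  have hIbe : M.IsBasis I (insert e Y) :=
    hI.indep.isBasis_of_subset_of_subset_closure (hI.subset.trans (Set.subset_insert _ _))
      (Set.insert_subset (by rwa [hI.closure_eq_closure]) hI.subset_closure)
  obtain ⟨B, hB, hIB⟩ := hIbe.exists_isBase
  have heB : e ∉ B := fun h' => heI (hIB ▸ (⟨h', Set.mem_insert _ _⟩ : e ∈ B ∩ insert e Y))
  have hIsubB : I ⊆ B := fun i hi => (hIB ▸ hi : i ∈ B ∩ insert e Y).1
  have hxI : ∀ x ∈ X, x ∉ I := fun x hx hxI => by
    have := hI.subset hxI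
    exact this (Set.mem_union_left _ hx)
  have hXcl : X ⊆ M✶.closure (X \ B) := by
    intro x hx
    by_cases hxB : x ∈ B
    · refine dual_closure_helper hE hB hxB ?_ (fun h' => h'.2 hxB) Set.disjoint_sdiff_left
      intro b hb
      by_cases hbB : b ∈ B
      · have hbx : b ≠ x := fun h' => hb (h' ▸ Set.mem_insert _ _)
        exact M.subset_closure _ (by rw [hE]; exact Set.subset_univ _) ⟨hbB, hbx⟩
      · have hbX : b ∉ X := fun h' => hb (Set.mem_insert_of_mem _ ⟨h', hbB⟩)
        have hbcl : b ∈ M.closure I := by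
          by_cases hbe : b = e
          · rw [hbe, hI.closure_eq_closure]; exact h
          · exact hI.subset_closure (by simp [hY, hbX, hbe])
        exact M.closure_subset_closure
          (show I ⊆ B \ {x} from fun i hi => ⟨hIsubB hi, fun h' => hxI x hx (h' ▸ hi)⟩) hbcl
    · exact M✶.subset_closure _ (by rw [dual_ground, hE]; exact Set.subset_univ _) ⟨hx, hxB⟩
  have h1 : M✶.closure X ⊆ M✶.closure (X \ B) :=
    Matroid.closure_subset_closure_of_subset_closure hXcl
  have hind : M✶.Indep (insert e (X \ B)) :=
    (dual_indep_iff_exists (by rw [hE]; exact Set.subset_univ _)).2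
      ⟨B, hB, by
        rw [Set.disjoint_left]
        rintro a (rfl | ⟨_, haB⟩) haB'
        · exact heB haB'
        · exact haB haB'⟩
  have hJ : M✶.Indep (X \ B) := hind.subset (Set.subset_insert _ _)
  have : e ∉ M✶.closure (X \ B) := by
    rw [hJ.mem_closure_iff]
    rintro (hdep' | hmem)
    · exact hdep'.not_indep hind
    · exact heX hmem.1
  exact this (h1 hecl)

open Matroid in
lemma mem_dual_closure {α : Type*} {M : Matroid α} (hE : M.E = Set.univ)
    {e : α} {X : Set α} (heX : e ∉ X) (h : e ∉ M.closure ((X ∪ {e})ᶜ)) :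
    e ∈ M✶.closure X := by
  set Y := (X ∪ {e})ᶜ with hY
  obtain ⟨I, hI⟩ := M.exists_isBasis Y (by rw [hE]; exact Set.subset_univ _)
  have heY : e ∉ Y := by simp [hY]
  have heI : e ∉ I := fun h' => heY (hI.subset h')
  have heE : e ∈ M.E := by rw [hE]; trivial
  have h' : e ∉ M.closure I := by rwa [hI.closure_eq_closure]
  have hins : M.Indep (insert e I) := ((hI.indep.notMem_closure_iff heE).1 h').1
  have hbase : M.IsBasis (insert e I) (insert e Y) :=
    hins.isBasis_of_subset_of_subset_closure (Set.insert_subset_insert hI.subset)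
      (Set.insert_subset (M.subset_closure _ hins.subset_ground (Set.mem_insert _ _))
        (hI.subset_closure.trans (M.closure_subset_closure (Set.subset_insert _ _))))
  obtain ⟨B, hB, hIB⟩ := hbase.exists_isBase
  have heB : e ∈ B := (hIB ▸ Set.mem_insert e I : e ∈ B ∩ insert e Y).1
  have hIsubB : insert e I ⊆ B := fun i hi => (hIB ▸ hi : i ∈ B ∩ insert e Y).1
  have key : e ∈ M✶.closure (X \ B) := by
    refine dual_closure_helper hE hB heB ?_ (fun h' => heX h'.1) Set.disjoint_sdiff_left
    intro b hb
    have hbe : b ≠ e := fun h' => hb (h' ▸ Set.mem_insert _ _)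
    by_cases hbX : b ∈ X
    · have hbB : b ∈ B := by
        by_contra hbB
        exact hb (Set.mem_insert_of_mem _ ⟨hbX, hbB⟩)
      exact M.subset_closure _ (by rw [hE]; exact Set.subset_univ _) ⟨hbB, hbe⟩
    · have hbY : b ∈ Y := by simp [hY, hbX, hbe]
      have : b ∈ M.closure I := hI.subset_closure hbY
      exact M.closure_subset_closure
        (show I ⊆ B \ {e} from fun i hi =>
          ⟨hIsubB (Set.mem_insert_of_mem _ hi), fun h'' => heI (h'' ▸ hi)⟩) this
  exact M✶.closure_subset_closure Set.diff_subset key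


open Matroid in
lemma closure_iff_span {V : Type*} [AddCommGroup V] [Module k V]
    (M : Matroid (Fin n)) (hE : M.E = Set.univ) (f : Fin n → V)
    (hM : ∀ I : Set (Fin n), M.Indep I ↔ LinearIndependent k (fun i : I => f i))
    (A : Set (Fin n)) (i : Fin n) :
    i ∈ M.closure A ↔ f i ∈ Submodule.span k (f '' A) := by
  have key : ∀ I : Set (Fin n), M.Indep I → ∀ e,
      (e ∈ M.closure I ↔ f e ∈ Submodule.span k (f '' I)) := by
    intro I hI e
    by_cases heI : e ∈ I
    · exact iff_of_true (M.subset_closure I hI.subset_ground heI)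
        (Submodule.subset_span (Set.mem_image_of_mem f heI))
    constructor
    · intro hecl
      have hdep : M.Dep (insert e I) := ((hI.mem_closure_iff).1 hecl).resolve_right heI
      by_contra hsp
      exact hdep.not_indep ((hM _).2 ((linearIndepOn_insert heI).2 ⟨(hM I).1 hI, hsp⟩))
    · intro hsp
      rw [hI.mem_closure_iff]
      left
      rw [dep_iff]
      refine ⟨fun hind => ?_, by rw [hE]; exact Set.subset_univ _⟩
      exact ((linearIndepOn_insert heI).1 ((hM _).1 hind)).2 hsp
  obtain ⟨I, hI⟩ := M.exists_isBasis A (by rw [hE]; exact Set.subset_univ _)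
  have hspanEq : Submodule.span k (f '' I) = Submodule.span k (f '' A) := by
    refine le_antisymm (Submodule.span_mono (Set.image_mono hI.subset)) ?_
    rw [Submodule.span_le]
    rintro _ ⟨a, ha, rfl⟩
    exact (key I hI.indep a).1 (hI.subset_closure ha)
  rw [← hI.closure_eq_closure, key I hI.indep i, hspanEq]

open Matroid in
lemma circuit_mem_closure_diff {α : Type*} {M : Matroid α} {C : Set α} {e : α}
    (hC : MatroidCircuit M C) (he : e ∈ C) : e ∈ M.closure (C \ {e}) := by
  have hCd : M.Dep C := hC.prop
  have hind : M.Indep (C \ {e}) := by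
    by_contra hdep
    have hdep' : M.Dep (C \ {e}) := dep_of_not_indep hdep (Set.diff_subset.trans hCd.subset_ground)
    exact ((hC.2 hdep' Set.diff_subset) he).2 rfl
  have : M.Dep (insert e (C \ {e})) := by
    rwa [Set.insert_diff_singleton, Set.insert_eq_of_mem he]
  exact hind.mem_closure_iff.2 (Or.inl this)

open Matroid in
lemma exists_circuit_of_mem_closure {α : Type*} [Finite α] {M : Matroid α} {A : Set α} {e : α}
    (he : e ∈ M.closure A) (heA : e ∉ A) :
    ∃ C, MatroidCircuit M C ∧ e ∈ C ∧ C ⊆ insert e A := by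
  obtain ⟨I, hI⟩ := M.exists_isBasis (A ∩ M.E) Set.inter_subset_right
  have hIA : I ⊆ A := hI.subset.trans Set.inter_subset_left
  have heI : e ∉ I := fun h => heA (hIA h)
  have hecl : e ∈ M.closure I := by
    rw [hI.closure_eq_closure, closure_inter_ground]; exact he
  have hdep : M.Dep (insert e I) := (hI.indep.mem_closure_iff.1 hecl).resolve_right heI
  -- find a minimal dep subset
  have hwf : (setOf (fun D => M.Dep D ∧ D ⊆ insert e I)).Nonempty := ⟨_, hdep, le_refl _⟩
  obtain ⟨C, hC, hCmin⟩ := Set.Finite.exists_minimalFor id _ (Set.toFinite _) hwf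
  refine ⟨C, ⟨hC.1, fun D hD hDC => ?_⟩, ?_, hC.2.trans (Set.insert_subset_insert hIA)⟩
  · exact hCmin ⟨hD, hDC.trans hC.2⟩ hDC
  · by_contra heC
    have : C ⊆ I := fun c hc => ((hC.2 hc).resolve_left (fun h => heC (h ▸ hc)))
    exact hC.1.not_indep (hI.indep.subset this)

open Matroid in
lemma flat_of_closure_subset {α : Type*} {M : Matroid α} {F : Set α}
    (hFE : F ⊆ M.E) (h : M.closure F ⊆ F) : M.IsFlat F := by
  refine ⟨fun I X hIF hIX => ?_, hFE⟩
  have h1 : X ⊆ M.closure I := hIX.subset_closure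
  rw [hIF.closure_eq_closure] at h1
  exact h1.trans ((M.closure_subset_closure (Set.Subset.refl F)).trans h)

open Matroid in
lemma span_range_inf_bot (M : Matroid (Fin n)) (hE : M.E = Set.univ)
    (f g : Fin n → MvPolynomial (Fin n) k)
    (hf1 : ∀ i, (f i).IsHomogeneous 1) (hg1 : ∀ i, (g i).IsHomogeneous 1)
    (hM : ∀ I : Set (Fin n), M.Indep I ↔ LinearIndependent k (fun i : I => f i))
    (hMd : ∀ I : Set (Fin n), M✶.Indep I ↔ LinearIndependent k (fun i : I => g i))
    (hspan : ∀ j : Fin n, (X j : MvPolynomial (Fin n) k)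
      ∈ Submodule.span k (Set.range f ∪ Set.range g)) :
    Submodule.span k (Set.range f) ⊓ Submodule.span k (Set.range g) = ⊥ := by
  classical
  set U1 := Submodule.span k (Set.range f) with hU1
  set U2 := Submodule.span k (Set.range g) with hU2
  set H1 := Submodule.span k (Set.range (X : Fin n → MvPolynomial (Fin n) k)) with hH1
  have hU1H : U1 ≤ H1 := Submodule.span_le.2 (by
    rintro _ ⟨i, rfl⟩; exact mem_span_X_of_isHomogeneous_one _ (hf1 i))
  have hU2H : U2 ≤ H1 := Submodule.span_le.2 (by
    rintro _ ⟨i, rfl⟩; exact mem_span_X_of_isHomogeneous_one _ (hg1 i))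
  have hsup : U1 ⊔ U2 = H1 := by
    refine le_antisymm (sup_le hU1H hU2H) (Submodule.span_le.2 ?_)
    rintro _ ⟨j, rfl⟩
    rw [hU1, hU2, ← Submodule.span_union]
    exact hspan j
  haveI : FiniteDimensional k U1 := FiniteDimensional.span_of_finite k (Set.finite_range f)
  haveI : FiniteDimensional k U2 := FiniteDimensional.span_of_finite k (Set.finite_range g)
  obtain ⟨B, hB⟩ := M.exists_isBase
  have hBc : M✶.IsBase Bᶜ := by
    have := hB.compl_isBase_dual
    rw [Set.compl_eq_univ_diff, ← hE]
    exact this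
  -- finrank U1 = B.ncard
  haveI : Fintype B := (Set.toFinite B).fintype
  haveI : Fintype (Bᶜ : Set (Fin n)) := (Set.toFinite _).fintype
  have hU1eq : U1 = Submodule.span k (Set.range (fun i : B => f i)) := by
    rw [← Set.image_eq_range f B]
    refine le_antisymm (Submodule.span_le.2 ?_) (Submodule.span_mono (Set.image_subset_range f B))
    rintro _ ⟨i, rfl⟩
    rw [SetLike.mem_coe, ← closure_iff_span M hE f hM B i, hB.closure_eq, hE]
    trivial
  have hU2eq : U2 = Submodule.span k (Set.range (fun i : (Bᶜ : Set (Fin n)) => g i)) := by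
    rw [← Set.image_eq_range g Bᶜ]
    refine le_antisymm (Submodule.span_le.2 ?_) (Submodule.span_mono (Set.image_subset_range g _))
    rintro _ ⟨i, rfl⟩
    rw [SetLike.mem_coe, ← closure_iff_span M✶ (by rw [Matroid.dual_ground, hE]) g hMd Bᶜ i,
      hBc.closure_eq, Matroid.dual_ground, hE]
    trivial
  have hr1 : Module.finrank k U1 = Fintype.card B := by
    rw [hU1eq]
    exact finrank_span_eq_card ((hM B).1 hB.indep)
  have hr2 : Module.finrank k U2 = Fintype.card (Bᶜ : Set (Fin n)) := by
    rw [hU2eq]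
    exact finrank_span_eq_card ((hMd Bᶜ).1 hBc.indep)
  have hrH : Module.finrank k H1 = n := by
    rw [hH1, finrank_span_eq_card (MvPolynomial.linearIndependent_X (Fin n) k), Fintype.card_fin]
  have hcards : Fintype.card B + Fintype.card (Bᶜ : Set (Fin n)) = n := by
    rw [← Set.toFinset_card, ← Set.toFinset_card, Set.toFinset_compl,
      Finset.card_add_card_compl, Fintype.card_fin]
  have hmain := Submodule.finrank_sup_add_finrank_inf_eq U1 U2
  rw [hsup, hrH, hr1, hr2, hcards] at hmain
  have h0 : Module.finrank k ↥(U1 ⊓ U2) = 0 := by omega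
  haveI : FiniteDimensional k ↥(U1 ⊓ U2) :=
    Submodule.finiteDimensional_of_le inf_le_left
  exact Submodule.finrank_eq_zero.1 h0

end Helpers

/-- With `W` a realization of a matroid `M` and `𝔞 = (f 1 g 1, …, f n g n)`
the ideal of pairs of `W`, the minimal primes of `S/𝔞` are exactly the ideals
`𝔭_{F,F^∁} = (f i : i ∈ F) + (g j : j ∉ F)` as `F` ranges over the cyclic flats of `M`.
Consequently `V(𝔞) = ⋃_{F ∈ cyc(M)} V(𝔭_{F,F^∁})`. -/
theorem minimalPrimes_idealOfPairs
    (k : Type) [Field k] (n r : ℕ)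
    (M : Matroid (Fin n)) (hE : M.E = Set.univ)
    (hloopless : ∀ i : Fin n, M.Indep {i})
    (f g : Fin n → MvPolynomial (Fin n) k)
    (hf1 : ∀ i, (f i).IsHomogeneous 1) (hg1 : ∀ i, (g i).IsHomogeneous 1)
    -- `f` realizes `M` and `g` realizes the dual matroid `M✶`:
    (hM : ∀ I : Set (Fin n), M.Indep I ↔ LinearIndependent k (fun i : I => f i))
    (hMd : ∀ I : Set (Fin n), M✶.Indep I ↔ LinearIndependent k (fun i : I => g i))
    -- the `f i` and `g i` together span the space of linear forms, i.e. `S = k[W ⊕ W^⊥]`: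
    (hspan : ∀ j : Fin n, (X j : MvPolynomial (Fin n) k)
      ∈ Submodule.span k (Set.range f ∪ Set.range g))
    -- the ideal of pairs:
    (𝔞 : Ideal (MvPolynomial (Fin n) k))
    (h𝔞 : 𝔞 = Ideal.span (Set.range fun i => f i * g i)) :
    𝔞.minimalPrimes
      = {p : Ideal (MvPolynomial (Fin n) k) |
          ∃ F : Set (Fin n), IsCyclicFlat M F ∧ p = Ideal.span (f '' F ∪ g '' Fᶜ)} ∧
    PrimeSpectrum.zeroLocus (𝔞 : Set (MvPolynomial (Fin n) k))
      = ⋃ F ∈ {F : Set (Fin n) | IsCyclicFlat M F},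
          PrimeSpectrum.zeroLocus ((Ideal.span (f '' F ∪ g '' Fᶜ) : Ideal (MvPolynomial (Fin n) k)) : Set (MvPolynomial (Fin n) k)) := by
    classical
  subst h𝔞
  set 𝔞 := Ideal.span (Set.range fun i => f i * g i) with h𝔞
  set pI : Set (Fin n) → Ideal (MvPolynomial (Fin n) k) :=
    fun F => Ideal.span (f '' F ∪ g '' Fᶜ) with hpI
  have hhomog : ∀ F : Set (Fin n), ∀ t ∈ (f '' F ∪ g '' Fᶜ), t.IsHomogeneous 1 := by
    rintro F t (⟨i, _, rfl⟩ | ⟨j, _, rfl⟩)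
    exacts [hf1 i, hg1 j]
  have hprime : ∀ F, (pI F).IsPrime := fun F => (ideal_span_linear _ (hhomog F)).1
  have hlinpart := fun F => (ideal_span_linear _ (hhomog F)).2
  have hsub : ∀ F, 𝔞 ≤ pI F := by
    intro F
    rw [h𝔞, Ideal.span_le]
    rintro _ ⟨i, rfl⟩
    by_cases hiF : i ∈ F
    · exact Ideal.mul_mem_right _ _ (Ideal.subset_span (Or.inl ⟨i, hiF, rfl⟩))
    · exact Ideal.mul_mem_left _ _ (Ideal.subset_span (Or.inr ⟨i, hiF, rfl⟩))
  have hEd : M✶.E = Set.univ := by rw [Matroid.dual_ground, hE]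
  -- CORE: every prime over 𝔞 contains some pI F with F a cyclic flat
  have core : ∀ q : Ideal (MvPolynomial (Fin n) k), q.IsPrime → 𝔞 ≤ q →
      ∃ F, IsCyclicFlat M F ∧ pI F ≤ q := by
    intro q hq hle
    set A := {i : Fin n | f i ∈ q} with hA
    have hgq : ∀ j, j ∉ A → g j ∈ q := by
      intro j hj
      have hmul : f j * g j ∈ q := hle (Ideal.subset_span ⟨j, rfl⟩)
      exact (hq.mem_or_mem hmul).resolve_left hj
    set F := {e : Fin n | ∃ C, MatroidCircuit M C ∧ e ∈ C ∧ C ⊆ M.closure A} with hF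
    have hFB : F ⊆ M.closure A := by
      rintro e ⟨C, _, heC, hCB⟩
      exact hCB heC
    have hflat : M.IsFlat F := by
      apply flat_of_closure_subset (by rw [hE]; exact Set.subset_univ _)
      intro e he
      by_cases heF : e ∈ F
      · exact heF
      have heB : e ∈ M.closure A := by
        have h1 := M.closure_subset_closure hFB he
        rwa [Matroid.closure_closure] at h1
      obtain ⟨C, hC, heC, hCsub⟩ := exists_circuit_of_mem_closure he heF
      exact ⟨C, hC, heC, hCsub.trans (Set.insert_subset heB hFB)⟩
    have hcyc : IsCyclicFlat M F := by
      refine ⟨hflat, {C | MatroidCircuit M C ∧ C ⊆ M.closure A}, fun C hC => hC.1, ?_⟩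
      ext e
      simp only [hF, Set.mem_setOf_eq, Set.mem_sUnion]
      tauto
    refine ⟨F, hcyc, ?_⟩
    rw [hpI, Ideal.span_le]
    rintro t (⟨i, hiF, rfl⟩ | ⟨j, hjF, rfl⟩)
    · have hicl : i ∈ M.closure A := hFB hiF
      have hsp := (closure_iff_span M hE f hM A i).1 hicl
      exact span_k_le_ideal (by rintro _ ⟨a, ha, rfl⟩; exact ha) _ hsp
    · by_cases hjA : j ∈ A
      · have hnot : j ∉ M.closure (A \ {j}) := by
          intro hmem
          obtain ⟨C, hC, hjC, hCsub⟩ := exists_circuit_of_mem_closure hmem (fun h => h.2 rfl)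
          refine hjF ⟨C, hC, hjC, hCsub.trans ?_⟩
          rw [Set.insert_diff_singleton, Set.insert_eq_of_mem hjA]
          exact M.subset_closure A (by rw [hE]; exact Set.subset_univ _)
        have hdual : j ∈ M✶.closure Aᶜ := by
          apply mem_dual_closure hE (by simp [hjA])
          have hcompl : ((Aᶜ ∪ {j})ᶜ : Set (Fin n)) = A \ {j} := by
            rw [Set.compl_union, compl_compl, Set.diff_eq]
          rwa [hcompl]
        have hsp := (closure_iff_span M✶ hEd g hMd Aᶜ j).1 hdual
        exact span_k_le_ideal (by rintro _ ⟨a, ha, rfl⟩; exact hgq a ha) _ hsp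
      · exact hgq j hjA
  -- splitting in the direct sum
  have hds := span_range_inf_bot M hE f g hf1 hg1 hM hMd hspan
  have split : ∀ F : Set (Fin n), ∀ x : MvPolynomial (Fin n) k,
      x ∈ Submodule.span k (f '' F ∪ g '' Fᶜ) →
      (x ∈ Submodule.span k (Set.range f) → x ∈ Submodule.span k (f '' F)) ∧
      (x ∈ Submodule.span k (Set.range g) → x ∈ Submodule.span k (g '' Fᶜ)) := by
    intro F x hx
    rw [Submodule.span_union, Submodule.mem_sup] at hx
    obtain ⟨u, hu, v, hv, rfl⟩ := hx
    have huf : u ∈ Submodule.span k (Set.range f) :=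
      Submodule.span_mono (Set.image_subset_range f F) hu
    have hvg : v ∈ Submodule.span k (Set.range g) :=
      Submodule.span_mono (Set.image_subset_range g Fᶜ) hv
    constructor
    · intro hxf
      have hv0 : v ∈ Submodule.span k (Set.range f) ⊓ Submodule.span k (Set.range g) := by
        constructor
        · have : v = (u + v) - u := by ring
          rw [this]
          exact Submodule.sub_mem _ hxf huf
        · exact hvg
      rw [hds] at hv0
      rw [Submodule.mem_bot] at hv0
      rw [hv0, add_zero]
      exact hu
    · intro hxg
      have hu0 : u ∈ Submodule.span k (Set.range f) ⊓ Submodule.span k (Set.range g) := by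
        refine ⟨huf, ?_⟩
        have : u = (u + v) - v := by ring
        rw [this]
        exact Submodule.sub_mem _ hxg hvg
      rw [hds] at hu0
      rw [Submodule.mem_bot] at hu0
      rw [hu0, zero_add]
      exact hv
  -- MIN: pI F is minimal over 𝔞 for F a cyclic flat
  have hmin : ∀ F, IsCyclicFlat M F → ∀ q : Ideal (MvPolynomial (Fin n) k),
      q.IsPrime → 𝔞 ≤ q → q ≤ pI F → pI F ≤ q := by
    intro F hFcyc q hq hle hqp
    obtain ⟨hflat, 𝒞, h𝒞, hFU⟩ := hFcyc
    rw [hpI, Ideal.span_le]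
    rintro t (⟨i, hiF, rfl⟩ | ⟨j, hjF, rfl⟩)
    · by_contra hfq
      have hgiq : g i ∈ q :=
        (hq.mem_or_mem (hle (Ideal.subset_span ⟨i, rfl⟩))).resolve_left hfq
      have hgip : g i ∈ pI F := hqp hgiq
      have hlin := hlinpart F (g i) (hg1 i) hgip
      have hgsp : g i ∈ Submodule.span k (g '' Fᶜ) :=
        (split F (g i) hlin).2 (Submodule.subset_span ⟨i, rfl⟩)
      have hidu : i ∈ M✶.closure Fᶜ := (closure_iff_span M✶ hEd g hMd Fᶜ i).2 hgsp
      -- but i ∈ F which is a union of circuits, so i ∉ M✶.closure Fᶜ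
      obtain ⟨C, hC𝒞, hiC⟩ : ∃ C ∈ 𝒞, i ∈ C := by
        have : i ∈ ⋃₀ 𝒞 := hFU ▸ hiF
        exact this
      have hCF : C ⊆ F := hFU ▸ (fun x hx => ⟨C, hC𝒞, hx⟩)
      have hicl : i ∈ M.closure (F \ {i}) := by
        have h1 := circuit_mem_closure_diff (h𝒞 C hC𝒞) hiC
        exact M.closure_subset_closure (Set.diff_subset_diff_left hCF) h1
      have hnd : i ∉ M✶.closure Fᶜ := by
        apply notMem_dual_closure hE (by simp [hiF])
        have hcompl : ((Fᶜ ∪ {i})ᶜ : Set (Fin n)) = F \ {i} := by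
          rw [Set.compl_union, compl_compl, Set.diff_eq]
        rwa [hcompl]
      exact hnd hidu
    · by_contra hgq
      have hfjq : f j ∈ q :=
        (hq.mem_or_mem (hle (Ideal.subset_span ⟨j, rfl⟩))).resolve_right hgq
      have hfjp : f j ∈ pI F := hqp hfjq
      have hlin := hlinpart F (f j) (hf1 j) hfjp
      have hfsp : f j ∈ Submodule.span k (f '' F) :=
        (split F (f j) hlin).1 (Submodule.subset_span ⟨j, rfl⟩)
      have : j ∈ M.closure F := (closure_iff_span M hE f hM F j).2 hfsp
      rw [hflat.closure] at this
      exact hjF this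
  constructor
  · ext q
    constructor
    · intro hq
      have hq' : Minimal (fun q : Ideal (MvPolynomial (Fin n) k) => q.IsPrime ∧ 𝔞 ≤ q) q := hq
      obtain ⟨F, hFc, hFle⟩ := core q hq'.prop.1 hq'.prop.2
      have hqle : q ≤ pI F := hq'.2 ⟨hprime F, hsub F⟩ hFle
      exact ⟨F, hFc, le_antisymm hqle hFle⟩
    · rintro ⟨F, hFc, rfl⟩
      show Minimal (fun q : Ideal (MvPolynomial (Fin n) k) => q.IsPrime ∧ 𝔞 ≤ q) (pI F)
      exact ⟨⟨hprime F, hsub F⟩, fun y hy hyle => hmin F hFc y hy.1 hy.2 hyle⟩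
  · ext x
    simp only [Set.mem_setOf_eq, Set.mem_iUnion, PrimeSpectrum.mem_zeroLocus]
    constructor
    · intro hx
      obtain ⟨F, hFc, hFle⟩ := core x.asIdeal x.isPrime (fun y hy => hx hy)
      exact ⟨F, hFc, fun y hy => hFle hy⟩
    · rintro ⟨F, hFc, hx⟩
      intro y hy
      exact hx (hsub F hy)
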